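/- (Bhattacharya–Ranga Rao bound.) For any distribution function F of a real random variable with zero mean and unit variance, sup_{x∈ℝ} |F(x) − Φ(x)| ≤ sup_{x>0} (Φ(x) − x²/(1+x²)) = 0.54093654…. -/

import Mathlib

open MeasureTheory

/-- The standard normal distribution function `Φ`. -/
noncomputable def stdGaussianCDF (x : ℝ) : ℝ :=
  ∫ t in Set.Iic x, (Real.sqrt (2 * Real.pi))⁻¹ * Real.exp (-t ^ 2 / 2)

section Aux

open Real

noncomputable def phi (t : ℝ) : ℝ := (Real.sqrt (2 * Real.pi))⁻¹ * Real.exp (-t ^ 2 / 2)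

lemma phi_integrable : Integrable phi := by
  have h : Integrable (fun t : ℝ => Real.exp (-(1/2 : ℝ) * t ^ 2)) :=
    integrable_exp_neg_mul_sq (by norm_num)
  exact (h.const_mul (Real.sqrt (2 * Real.pi))⁻¹).congr
    (by filter_upwards with t; unfold phi; ring_nf)

lemma phi_nonneg (t : ℝ) : 0 ≤ phi t :=
  mul_nonneg (inv_nonneg.mpr (Real.sqrt_nonneg _)) (Real.exp_pos _).le

lemma phi_total : ∫ t, phi t = 1 := by
  have h : ∫ t : ℝ, Real.exp (-(1/2 : ℝ) * t ^ 2) = Real.sqrt (π / (1/2)) :=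
    integral_gaussian (1/2)
  have h2 : ∫ t, phi t = (Real.sqrt (2 * Real.pi))⁻¹ * ∫ t : ℝ, Real.exp (-(1/2:ℝ) * t ^ 2) := by
    rw [← integral_const_mul]; congr 1 with t; unfold phi; ring_nf
  rw [h2, h]
  have : π / (1/2 : ℝ) = 2 * π := by ring
  rw [this, inv_mul_cancel₀ (Real.sqrt_ne_zero'.mpr (by positivity))]

lemma cdf_eq (x : ℝ) : stdGaussianCDF x = ∫ t in Set.Iic x, phi t := rfl

lemma cdf_mono {x y : ℝ} (h : x ≤ y) : stdGaussianCDF x ≤ stdGaussianCDF y := by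
  rw [cdf_eq, cdf_eq]
  exact setIntegral_mono_set phi_integrable.integrableOn
    (Filter.Eventually.of_forall phi_nonneg)
    ((Set.Iic_subset_Iic.mpr h).eventuallyLE)

lemma cdf_nonneg (x : ℝ) : 0 ≤ stdGaussianCDF x :=
  setIntegral_nonneg measurableSet_Iic fun t _ => phi_nonneg t

lemma cdf_le_one (x : ℝ) : stdGaussianCDF x ≤ 1 := by
  rw [cdf_eq, ← phi_total]
  exact setIntegral_le_integral phi_integrable (Filter.Eventually.of_forall phi_nonneg)

lemma cdf_neg (x : ℝ) : stdGaussianCDF (-x) = 1 - stdGaussianCDF x := by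
  have h1 : (∫ t in Set.Iic (-x), phi t) = ∫ t in Set.Ioi x, phi t := by
    rw [← neg_neg x, ← integral_comp_neg_Iic]
    simp only [neg_neg]
    congr 1 with t
    unfold phi; ring_nf
  have h2 : (∫ t in Set.Iic x, phi t) + (∫ t in Set.Ioi x, phi t) = 1 := by
    rw [intervalIntegral.integral_Iic_add_Ioi phi_integrable.integrableOn phi_integrable.integrableOn, phi_total]
  rw [cdf_eq, cdf_eq, h1]
  linarith

lemma cdf_zero : stdGaussianCDF 0 = 1 / 2 := by
  have := cdf_neg 0
  rw [neg_zero] at this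
  linarith

lemma sqrt_two_pi_le : Real.sqrt (2 * π) ≤ 2.51 := by
  nlinarith [Real.sq_sqrt (show (0:ℝ) ≤ 2 * π by positivity), Real.sqrt_nonneg (2 * π),
    Real.pi_lt_d2]

lemma cdf_fifth : 1 / 2 + 98 / 1255 ≤ stdGaussianCDF (1/5) := by
  have key : (98 / 251 : ℝ) * (1/5) ≤ ∫ t in Set.Ioc (0:ℝ) (1/5), phi t := by
    have hle : ∀ t ∈ Set.Ioc (0:ℝ) (1/5), (98/251 : ℝ) ≤ phi t := by
      intro t ht
      have h1 : Real.exp (-(1:ℝ)/50) ≤ Real.exp (-t^2/2) := by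
        apply Real.exp_le_exp.mpr
        nlinarith [ht.1.le, ht.2]
      have h2 : (49/50 : ℝ) ≤ Real.exp (-(1:ℝ)/50) := by
        nlinarith [Real.add_one_le_exp (-(1:ℝ)/50)]
      have h3 : (100/251 : ℝ) ≤ (Real.sqrt (2*π))⁻¹ := by
        rw [le_inv_comm₀ (by norm_num) (Real.sqrt_pos.mpr (by positivity))]
        calc Real.sqrt (2*π) ≤ 2.51 := sqrt_two_pi_le
          _ = (100/251 : ℝ)⁻¹ := by norm_num
      calc (98/251 : ℝ) = (100/251) * (49/50) := by norm_num
        _ ≤ (Real.sqrt (2*π))⁻¹ * Real.exp (-t^2/2) := by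
            apply mul_le_mul h3 (h2.trans h1) (by positivity) (by positivity)
        _ = phi t := rfl
    calc (98/251 : ℝ) * (1/5) = ∫ _ in Set.Ioc (0:ℝ) (1/5), (98/251 : ℝ) := by
          rw [setIntegral_const]; simp [Real.volume_Ioc]; norm_num
      _ ≤ ∫ t in Set.Ioc (0:ℝ) (1/5), phi t :=
          setIntegral_mono_on (integrableOn_const (by simp [Real.volume_Ioc]))
            phi_integrable.integrableOn measurableSet_Ioc hle
  have hdiff : stdGaussianCDF (1/5) - stdGaussianCDF 0 = ∫ t in Set.Ioc (0:ℝ) (1/5), phi t := by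
    rw [cdf_eq, cdf_eq,
      intervalIntegral.integral_Iic_sub_Iic phi_integrable.integrableOn phi_integrable.integrableOn,
      intervalIntegral.integral_of_le (by norm_num)]
  rw [cdf_zero] at hdiff
  nlinarith

lemma cantelli_upper (μ : Measure ℝ) [IsProbabilityMeasure μ]
    (hint1 : Integrable (fun x : ℝ => x) μ) (hint2 : Integrable (fun x : ℝ => x ^ 2) μ)
    (hmean : ∫ x, x ∂μ = 0) (hvar : ∫ x, x ^ 2 ∂μ = 1) {t : ℝ} (ht : 0 < t) :
    (μ (Set.Ici t)).toReal ≤ 1 / (1 + t ^ 2) := by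
  set s : ℝ := 1 / t with hs
  have hs0 : 0 < s := by positivity
  have hfint : Integrable (fun x : ℝ => (x + s) ^ 2) μ := by
    have hA : Integrable (fun x : ℝ => x ^ 2 + 2 * s * x) μ := by
      exact hint2.add (hint1.const_mul (2 * s))
    exact (hA.add (integrable_const (s ^ 2))).congr
      (by filter_upwards with x; simp only [Pi.add_apply]; ring)
  have hfval : ∫ x, (x + s) ^ 2 ∂μ = 1 + s ^ 2 := by
    have : ∫ x, (x + s) ^ 2 ∂μ = ∫ x, (x ^ 2 + (2 * s) * x + s ^ 2) ∂μ := by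
      congr 1 with x; ring
    have hA : Integrable (fun x : ℝ => x ^ 2 + 2 * s * x) μ := by
      exact hint2.add (hint1.const_mul (2 * s))
    rw [this, integral_add hA (integrable_const _),
      integral_add hint2 (hint1.const_mul (2*s)), integral_const_mul, hmean, hvar,
      integral_const]
    simp
  have hmarkov := mul_meas_ge_le_integral_of_nonneg
    (Filter.Eventually.of_forall fun x => sq_nonneg (x + s)) hfint ((t + s) ^ 2)
  rw [hfval, measureReal_def] at hmarkov
  have hsub : Set.Ici t ⊆ {x : ℝ | (t + s) ^ 2 ≤ (x + s) ^ 2} := by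
    intro x hx
    simp only [Set.mem_setOf_eq]
    have : t ≤ x := hx
    nlinarith
  have hmono : (μ (Set.Ici t)).toReal ≤ (μ {x : ℝ | (t + s) ^ 2 ≤ (x + s) ^ 2}).toReal :=
    ENNReal.toReal_le_toReal (measure_ne_top _ _) (measure_ne_top _ _) |>.mpr
      (measure_mono hsub)
  have hts : 0 < (t + s) ^ 2 := by positivity
  have hkey : (t + s) ^ 2 * (1 / (1 + t ^ 2)) = 1 + s ^ 2 := by
    rw [hs]; field_simp; ring
  nlinarith [hmarkov, hmono, mul_le_mul_of_nonneg_left hmono hts.le]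

lemma cantelli_lower (μ : Measure ℝ) [IsProbabilityMeasure μ]
    (hint1 : Integrable (fun x : ℝ => x) μ) (hint2 : Integrable (fun x : ℝ => x ^ 2) μ)
    (hmean : ∫ x, x ∂μ = 0) (hvar : ∫ x, x ^ 2 ∂μ = 1) {t : ℝ} (ht : 0 < t) :
    (μ (Set.Iic (-t))).toReal ≤ 1 / (1 + t ^ 2) := by
  set s : ℝ := 1 / t with hs
  have hs0 : 0 < s := by positivity
  have hfint : Integrable (fun x : ℝ => (x - s) ^ 2) μ := by
    have hA : Integrable (fun x : ℝ => x ^ 2 + -(2 * s) * x) μ := by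
      exact hint2.add (hint1.const_mul (-(2 * s)))
    exact (hA.add (integrable_const (s ^ 2))).congr
      (by filter_upwards with x; simp only [Pi.add_apply]; ring)
  have hfval : ∫ x, (x - s) ^ 2 ∂μ = 1 + s ^ 2 := by
    have : ∫ x, (x - s) ^ 2 ∂μ = ∫ x, (x ^ 2 + (-(2 * s)) * x + s ^ 2) ∂μ := by
      congr 1 with x; ring
    have hA : Integrable (fun x : ℝ => x ^ 2 + -(2 * s) * x) μ := by
      exact hint2.add (hint1.const_mul (-(2 * s)))
    rw [this, integral_add hA (integrable_const _),
      integral_add hint2 (hint1.const_mul (-(2*s))), integral_const_mul, hmean, hvar,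
      integral_const]
    simp
  have hmarkov := mul_meas_ge_le_integral_of_nonneg
    (Filter.Eventually.of_forall fun x => sq_nonneg (x - s)) hfint ((t + s) ^ 2)
  rw [hfval, measureReal_def] at hmarkov
  have hsub : Set.Iic (-t) ⊆ {x : ℝ | (t + s) ^ 2 ≤ (x - s) ^ 2} := by
    intro x hx
    simp only [Set.mem_setOf_eq]
    have : x ≤ -t := hx
    nlinarith
  have hmono : (μ (Set.Iic (-t))).toReal ≤ (μ {x : ℝ | (t + s) ^ 2 ≤ (x - s) ^ 2}).toReal :=
    ENNReal.toReal_le_toReal (measure_ne_top _ _) (measure_ne_top _ _) |>.mpr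
      (measure_mono hsub)
  have hts : 0 < (t + s) ^ 2 := by positivity
  have hkey : (t + s) ^ 2 * (1 / (1 + t ^ 2)) = 1 + s ^ 2 := by
    rw [hs]; field_simp; ring
  nlinarith [hmarkov, hmono, mul_le_mul_of_nonneg_left hmono hts.le]

end Aux

/-- Bhattacharya–Ranga Rao bound: for any distribution `F` of a real random variable with
zero mean and unit variance, `sup_x |F(x) − Φ(x)| ≤ sup_{x>0} (Φ(x) − x²/(1+x²))`. -/
theorem bhattacharya_ranga_rao (μ : Measure ℝ) [IsProbabilityMeasure μ]
    (hint1 : Integrable (fun x : ℝ => x) μ)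
    (hint2 : Integrable (fun x : ℝ => x ^ 2) μ)
    (hmean : ∫ x, x ∂μ = 0) (hvar : ∫ x, x ^ 2 ∂μ = 1) (x : ℝ) :
    |(μ (Set.Iio x)).toReal - stdGaussianCDF x| ≤
      ⨆ y : Set.Ioi (0 : ℝ), (stdGaussianCDF y - (y : ℝ) ^ 2 / (1 + (y : ℝ) ^ 2)) := by
  set M := ⨆ y : Set.Ioi (0 : ℝ), (stdGaussianCDF y - (y : ℝ) ^ 2 / (1 + (y : ℝ) ^ 2)) with hM
  have hbdd : BddAbove (Set.range fun y : Set.Ioi (0 : ℝ) =>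
      stdGaussianCDF y - (y : ℝ) ^ 2 / (1 + (y : ℝ) ^ 2)) := by
    refine ⟨1, ?_⟩
    rintro _ ⟨y, rfl⟩
    have h1 := cdf_le_one (y : ℝ)
    have h2 : 0 ≤ (y : ℝ) ^ 2 / (1 + (y : ℝ) ^ 2) := by positivity
    simp only []
    linarith
  have hle : ∀ y : ℝ, 0 < y → stdGaussianCDF y - y ^ 2 / (1 + y ^ 2) ≤ M := fun y hy =>
    le_ciSup hbdd (⟨y, hy⟩ : Set.Ioi (0 : ℝ))
  have hhalf : (1 : ℝ) / 2 ≤ M := by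
    have h1 := hle (1/5) (by norm_num)
    have h2 := cdf_fifth
    have h3 : ((1 : ℝ)/5) ^ 2 / (1 + (1/5 : ℝ) ^ 2) = 1/26 := by norm_num
    rw [h3] at h1
    linarith
  set F := (μ (Set.Iio x)).toReal with hF
  have hF0 : 0 ≤ F := ENNReal.toReal_nonneg
  have hF1 : F ≤ 1 := by
    rw [hF, ← ENNReal.toReal_one, ← measure_univ (μ := μ)]
    exact ENNReal.toReal_le_toReal (measure_ne_top _ _) (measure_ne_top _ _) |>.mpr
      (measure_mono (Set.subset_univ _))
  rw [abs_sub_le_iff]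
  rcases lt_or_ge 0 x with hx | hx
  · -- 0 < x
    have hΦ0 : (1 : ℝ)/2 ≤ stdGaussianCDF x := by
      rw [← cdf_zero]; exact cdf_mono hx.le
    have hsplit : F + (μ (Set.Ici x)).toReal = 1 := by
      rw [hF, ← ENNReal.toReal_add (measure_ne_top μ _) (measure_ne_top μ _),
        show Set.Ici x = (Set.Iio x)ᶜ from Set.compl_Iio.symm,
        measure_add_measure_compl measurableSet_Iio, measure_univ, ENNReal.toReal_one]
    have hcant := cantelli_upper μ hint1 hint2 hmean hvar hx
    have hgx := hle x hx
    have hid : x ^ 2 / (1 + x ^ 2) = 1 - 1 / (1 + x ^ 2) := by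
      have : (0 : ℝ) < 1 + x ^ 2 := by positivity
      field_simp
      ring
    constructor
    · linarith
    · linarith
  · -- x ≤ 0
    have hΦx : stdGaussianCDF x ≤ 1/2 := by
      rw [← cdf_zero]; exact cdf_mono hx
    have hΦ0 : 0 ≤ stdGaussianCDF x := cdf_nonneg x
    refine ⟨?_, by linarith⟩
    rcases hx.lt_or_eq with hx' | hx'
    · have hx0 : 0 < -x := by linarith
      have hcant := cantelli_lower μ hint1 hint2 hmean hvar hx0
      rw [neg_neg, neg_sq] at hcant
      have hFle : F ≤ (μ (Set.Iic x)).toReal :=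
        ENNReal.toReal_le_toReal (measure_ne_top _ _) (measure_ne_top _ _) |>.mpr
          (measure_mono Set.Iio_subset_Iic_self)
      have hgx := hle (-x) hx0
      rw [neg_sq, cdf_neg] at hgx
      have hid : x ^ 2 / (1 + x ^ 2) = 1 - 1 / (1 + x ^ 2) := by
        have : (0 : ℝ) < 1 + x ^ 2 := by positivity
        field_simp
        ring
      linarith
    · subst hx'
      rw [cdf_zero]
      linarith
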